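/- Consider the four-node Braess graph with vertices s, u, v, t, edges (s,u) and (v,t) with latency x² + x, edges (s,v) and (u,t) with latency a·x, and edge (u,v) with constant latency b, where a = 1 + (d₁+d₂)/2 and b = d₁d₂/4 for given reals d₂ > d₁ ≥ 1. Then for any demand d routed from s to t, the flow on edge (u,v) at Wardrop equilibrium is strictly positive if and only if d₁ < d < d₂. -/
import Mathlib


set_option maxHeartbeats 2000000 in
/-- First part of Claim 5.7. In the Braess graph with edges `(s,u)`, `(v,t)` of
latency `x² + x`, edges `(s,v)`, `(u,t)` of latency `a·x` with `a = 1 + (d₁+d₂)/2`,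
and edge `(u,v)` of constant latency `b = d₁d₂/4` (where `d₂ > d₁ ≥ 1`), a Wardrop
equilibrium for demand `d ≥ 0`, described by its path flows `y₁` (on `s-u-t`),
`y₂` (on `s-v-t`) and `y₃` (on `s-u-v-t`), has strictly positive flow on the Braess
edge `(u,v)` iff `d₁ < d < d₂`. -/
theorem braess_edge_positive_iff
    (d1 d2 d y1 y2 y3 a b c1 c2 c3 : ℝ)
    (hd1 : 1 ≤ d1) (h12 : d1 < d2) (hd : 0 ≤ d)
    (ha : a = 1 + (d1 + d2) / 2) (hb : b = d1 * d2 / 4)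
    (hy1 : 0 ≤ y1) (hy2 : 0 ≤ y2) (hy3 : 0 ≤ y3) (hsum : y1 + y2 + y3 = d)
    -- path latencies at the flow (edge flows: su = y1+y3, ut = y1, sv = y2, vt = y2+y3, uv = y3)
    (hc1 : c1 = ((y1 + y3) ^ 2 + (y1 + y3)) + a * y1)
    (hc2 : c2 = a * y2 + ((y2 + y3) ^ 2 + (y2 + y3)))
    (hc3 : c3 = ((y1 + y3) ^ 2 + (y1 + y3)) + b + ((y2 + y3) ^ 2 + (y2 + y3)))
    -- Wardrop equilibrium: used paths have minimal latency
    (heq1 : 0 < y1 → c1 ≤ c2 ∧ c1 ≤ c3)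
    (heq2 : 0 < y2 → c2 ≤ c1 ∧ c2 ≤ c3)
    (heq3 : 0 < y3 → c3 ≤ c1 ∧ c3 ≤ c2) :
    0 < y3 ↔ (d1 < d ∧ d < d2) := by
  subst ha hb hc1 hc2 hc3
  have hapos : (0:ℝ) < 1 + (d1 + d2) / 2 := by nlinarith
  have hbpos : (0:ℝ) < d1 * d2 / 4 := by nlinarith
  constructor
  · intro h3
    obtain ⟨h31, h32⟩ := heq3 h3
    have hy1pos : 0 < y1 := by nlinarith [sq_nonneg (y2 + y3)]
    have hy2pos : 0 < y2 := by nlinarith [sq_nonneg (y1 + y3)]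
    obtain ⟨h12', h13⟩ := heq1 hy1pos
    obtain ⟨h21, h23⟩ := heq2 hy2pos
    have hE1 : (1 + (d1 + d2) / 2) * y1 = d1 * d2 / 4 + ((y2 + y3) ^ 2 + (y2 + y3)) := by
      nlinarith
    have hE2 : (1 + (d1 + d2) / 2) * y2 = d1 * d2 / 4 + ((y1 + y3) ^ 2 + (y1 + y3)) := by
      nlinarith
    have hy12 : y2 = y1 := by
      have hfac : (y1 - y2) * ((1 + (d1 + d2) / 2) + y1 + y2 + 2 * y3 + 1) = 0 := by
        linear_combination hE1 - hE2
      have hpos : (0:ℝ) < (1 + (d1 + d2) / 2) + y1 + y2 + 2 * y3 + 1 := by linarith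
      have := mul_eq_zero.mp hfac
      rcases this with h' | h'
      · linarith
      · linarith
    subst hy12
    have keyeq : (d - d1) * (d - d2)
        = -(4 * y2 * y3 + 3 * y3 ^ 2 + 2 * y3 + (2 + d1 + d2) * y3) := by
      linear_combination (-4 : ℝ) * hE1 - (d + 2 * y2 + y3 - d1 - d2) * hsum
    have key : (d - d1) * (d - d2) < 0 := by
      rw [keyeq]
      have t1 : 0 ≤ y2 * y3 := mul_nonneg hy2 h3.le
      have t2 : 0 < y3 ^ 2 := by positivity
      have t3 : 0 < (2 + d1 + d2) * y3 :=
        mul_pos (by linarith only [hd1, h12]) h3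
      linarith only [t1, t2, t3, h3]
    constructor
    · by_contra hcon
      push_neg at hcon
      have h0 : 0 ≤ (d1 - d) * (d2 - d) :=
        mul_nonneg (by linarith only [hcon]) (by linarith only [hcon, h12])
      have h1 : (d1 - d) * (d2 - d) = (d - d1) * (d - d2) := by ring
      linarith only [h0, h1, key]
    · by_contra hcon
      push_neg at hcon
      have : 0 ≤ (d - d1) * (d - d2) :=
        mul_nonneg (by linarith only [hcon, h12]) (by linarith only [hcon])
      linarith only [this, key]
  · rintro ⟨hdl, hdr⟩
    by_contra h
    have h30 : y3 = 0 := le_antisymm (not_lt.mp h) hy3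
    subst h30
    have hdpos : 0 < d := by linarith
    rcases hy1.lt_or_eq with h1 | h1
    · obtain ⟨h12', h13⟩ := heq1 h1
      rcases hy2.lt_or_eq with h2 | h2
      · obtain ⟨h21, h23⟩ := heq2 h2
        have hy12 : y1 = y2 := by
          apply le_antisymm <;> nlinarith
        have hgoal : 0 ≤ (d - d1) * (d - d2) := by nlinarith
        nlinarith [mul_pos (sub_pos.2 hdl) (sub_pos.2 hdr)]
      · -- y2 = 0, so y1 = d
        nlinarith
    · -- y1 = 0, so y2 = d
      have h2 : 0 < y2 := by linarith
      obtain ⟨h21, h23⟩ := heq2 h2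
      nlinarith
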